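/- The left-associative floating-point partial sums s_k = ⊕_{i=1}^k 1^+ (with s_0 = 0), where 1^+ = 1 + 2^{−p} is the successor of 1 in 𝔽, satisfy: (i) s_0, s_1, …, s_{3·2^p−1} are pairwise distinct; (ii) s_{3·2^p−1+n} = 2^{p+2} for every n ∈ ℕ∪{0}. Explicitly, s_k = 0 for k=0, 1^+ for k=1, 2^+ for k=2, 3^{++} for k=3, k^+ for 4 ≤ k ≤ 2^p, k+1 for 2^p+1 ≤ k ≤ 2^{p+1}−1, and 2^{p+1} + 2(k − 2^{p+1} + 1) for 2^{p+1} ≤ k ≤ 3·2^p − 1. -/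

import Mathlib

open scoped Classical

namespace FPT

noncomputable section

/-- Minimal exponent `𝔢_min = -2^(q-1) + 2`. -/
def emin (q : ℕ) : ℤ := -(2 ^ (q - 1) : ℤ) + 2

/-- Maximal exponent `𝔢_max = 2^(q-1) - 1`. -/
def emax (q : ℕ) : ℤ := (2 ^ (q - 1) : ℤ) - 1

/-- The set of finite floating-point numbers with `p` mantissa bits and exponent bits `q`:
normal numbers `±(1.m₁⋯m_p)·2^e = m·2^(e-p)` with `2^p ≤ |m| ≤ 2^(p+1)-1` and
`emin ≤ e ≤ emax`, together with subnormal numbers `±(0.m₁⋯m_p)·2^emin = m·2^(emin-p)`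
with `|m| ≤ 2^p - 1`. -/
def Fset (p q : ℕ) : Set ℝ :=
  {x | ∃ m e : ℤ, |m| ≤ 2 ^ (p + 1) - 1 ∧ emin q ≤ e ∧ e ≤ emax q ∧
      ((2 : ℤ) ^ p ≤ |m| ∨ e = emin q) ∧ x = (m : ℝ) * (2 : ℝ) ^ (e - (p : ℤ))}

/-- The largest positive float `Ω = (2 - 2^(-p))·2^emax`. -/
def Omega (p q : ℕ) : ℝ := (2 - (2 : ℝ) ^ (-(p : ℤ))) * (2 : ℝ) ^ (emax q)

/-- Overflow threshold `Ω + 2^(emax - p - 1)`. -/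
def thr (p q : ℕ) : ℝ := Omega p q + (2 : ℝ) ^ (emax q - (p : ℤ) - 1)

/-- `y` is a float whose last mantissa bit `m_p` is zero, i.e. `y = m·2^(e-p)` with `m` even. -/
def EvenMantissa (p q : ℕ) (y : ℝ) : Prop :=
  ∃ m e : ℤ, |m| ≤ 2 ^ (p + 1) - 1 ∧ emin q ≤ e ∧ e ≤ emax q ∧
    ((2 : ℤ) ^ p ≤ |m| ∨ e = emin q) ∧ y = (m : ℝ) * (2 : ℝ) ^ (e - (p : ℤ)) ∧ 2 ∣ m

/-- `RoundsTo p q x y` : `y` is the rounding of `x` to the nearest float, ties to even. -/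
def RoundsTo (p q : ℕ) (x y : ℝ) : Prop :=
  y ∈ Fset p q ∧ (∀ z ∈ Fset p q, |x - y| ≤ |x - z|) ∧
    ((∀ z ∈ Fset p q, |x - z| = |x - y| → z = y) ∨ EvenMantissa p q y)

/-- Extended floats `𝔽̄ = 𝔽 ∪ {-∞, +∞, NaN}` (the payload of `fin` is meant to lie in `Fset`). -/
inductive EF where
  | fin : ℝ → EF
  | pinf : EF
  | ninf : EF
  | nan : EF

/-- Rounding `⌊·⌉ : ℝ → 𝔽̄`. -/
def rnd (p q : ℕ) (x : ℝ) : EF :=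
  if thr p q ≤ x then .pinf
  else if x ≤ -thr p q then .ninf
  else .fin (Classical.epsilon (RoundsTo p q x))

/-- Floating-point addition `⊕`. -/
def fadd (p q : ℕ) : EF → EF → EF
  | .nan, _ => .nan
  | _, .nan => .nan
  | .fin x, .fin y => rnd p q (x + y)
  | .fin _, .pinf => .pinf
  | .fin _, .ninf => .ninf
  | .pinf, .fin _ => .pinf
  | .ninf, .fin _ => .ninf
  | .pinf, .pinf => .pinf
  | .ninf, .ninf => .ninf
  | .pinf, .ninf => .nan
  | .ninf, .pinf => .nan

/-- Floating-point multiplication `⊗`. -/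
def fmul (p q : ℕ) : EF → EF → EF
  | .nan, _ => .nan
  | _, .nan => .nan
  | .fin x, .fin y => rnd p q (x * y)
  | .fin x, .pinf => if 0 < x then .pinf else if x < 0 then .ninf else .nan
  | .fin x, .ninf => if 0 < x then .ninf else if x < 0 then .pinf else .nan
  | .pinf, .fin y => if 0 < y then .pinf else if y < 0 then .ninf else .nan
  | .ninf, .fin y => if 0 < y then .ninf else if y < 0 then .pinf else .nan
  | .pinf, .pinf => .pinf
  | .ninf, .ninf => .pinf
  | .pinf, .ninf => .ninf
  | .ninf, .pinf => .ninf

/-- Floating-point subtraction `x ⊖ y = x ⊕ ((-1) ⊗ y)`. -/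
def fsub (p q : ℕ) (x y : EF) : EF := fadd p q x (fmul p q (.fin (-1)) y)

/-- Floating-point division (defined for `0 ≤ x ≤ y < ∞`, `y > 0`; NaN propagates). -/
def fdiv (p q : ℕ) : EF → EF → EF
  | _, .nan => .nan
  | .nan, _ => .nan
  | .fin x, .fin y => if 0 < y then rnd p q (x / y) else .nan
  | _, _ => .nan

/-- Correctly rounded exponential `⌊exp⌉`. -/
def fexp (p q : ℕ) : EF → EF
  | .fin x => rnd p q (Real.exp x)
  | .pinf => .pinf
  | .ninf => .fin 0
  | .nan => .nan

/-- Correctly rounded ReLU `ρ = ⌊ReLU⌉`. -/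
def frelu (p q : ℕ) : EF → EF
  | .fin x => rnd p q (max x 0)
  | .pinf => .pinf
  | .ninf => .fin 0
  | .nan => .nan

/-- Left-associative floating-point sum of a list (empty sum is `0`). -/
def fsuml (p q : ℕ) : List EF → EF
  | [] => .fin 0
  | x :: xs => xs.foldl (fadd p q) x

/-- Left-associative floating-point sum `⊕_{i=1}^{n} v i` over `Fin n`. -/
def fsum (p q : ℕ) {n : ℕ} (v : Fin n → EF) : EF := fsuml p q ((List.finRange n).map v)

/-- Matrices of extended floats. -/
abbrev Mat (a b : ℕ) := Fin a → Fin b → EF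

/-- Entrywise floating-point matrix addition. -/
def madd (p q : ℕ) {a b : ℕ} (M N : Mat a b) : Mat a b := fun i j => fadd p q (M i j) (N i j)

/-- Floating-point matrix multiplication with left-associative inner sums. -/
def mmul (p q : ℕ) {a b c : ℕ} (M : Mat a b) (N : Mat b c) : Mat a c :=
  fun i k => fsum p q (fun j => fmul p q (M i j) (N j k))

/-- Maximum of two extended floats (NaN-propagating). -/
def emax2 : EF → EF → EF
  | .nan, _ => .nan
  | _, .nan => .nan
  | .pinf, _ => .pinf
  | _, .pinf => .pinf
  | .fin x, .fin y => .fin (max x y)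
  | .fin x, .ninf => .fin x
  | .ninf, y => y

/-- Maximum entry of a vector of extended floats. -/
def vmax {n : ℕ} (v : Fin n → EF) : EF := ((List.finRange n).map v).foldl emax2 .ninf

/-- Floating-point softmax `σ(x)_i = ⌊exp⌉(x_i ⊖ x_*) ⊘ (⊕_j ⌊exp⌉(x_j ⊖ x_*))`. -/
def fsoftmax (p q : ℕ) {n : ℕ} (v : Fin n → EF) : Fin n → EF := fun i =>
  fdiv p q (fexp p q (fsub p q (v i) (vmax v)))
    (fsum p q (fun j => fexp p q (fsub p q (v j) (vmax v))))

/-- Column-wise application of the floating-point softmax. -/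
def colSoftmax (p q : ℕ) {k n : ℕ} (A : Mat k n) : Mat k n :=
  fun i j => fsoftmax p q (fun i' => A i' j) i

/-- The extended float is a finite float in `𝔽`. -/
def EF.IsF (p q : ℕ) : EF → Prop
  | .fin x => x ∈ Fset p q
  | _ => False

/-- The extended float is a well-formed element of `𝔽̄`. -/
def EF.Valid (p q : ℕ) : EF → Prop
  | .fin x => x ∈ Fset p q
  | _ => True

/-- The extended float is finite (not `±∞` or NaN). -/
def EF.Finite : EF → Prop
  | .fin _ => True
  | _ => False

/-- All entries of a vector are finite floats. -/
def VecFin (p q : ℕ) {a : ℕ} (v : Fin a → EF) : Prop := ∀ i, (v i).IsF p q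

/-- All entries of a matrix are finite floats. -/
def MatFin (p q : ℕ) {a b : ℕ} (M : Mat a b) : Prop := ∀ i j, (M i j).IsF p q

/-- Embed a real matrix as a matrix of extended floats. -/
def toEF {a b : ℕ} (M : Fin a → Fin b → ℝ) : Mat a b := fun i j => .fin (M i j)

/-- Parameters of one transformer block (attention layer followed by feed-forward layer)
with `h` heads, head dimension `m`, feed-forward width `r`, hidden dimension `d`. -/
structure Block (h m r d : ℕ) where
  WK : Fin h → Fin m → Fin d → ℝ
  WQ : Fin h → Fin m → Fin d → ℝ
  WV : Fin h → Fin m → Fin d → ℝ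
  WO : Fin h → Fin d → Fin m → ℝ
  W1 : Fin r → Fin d → ℝ
  W2 : Fin d → Fin r → ℝ
  b1 : Fin r → ℝ
  b2 : Fin d → ℝ

/-- All parameters of the block are floats. -/
def Block.Valid (p q : ℕ) {h m r d : ℕ} (B : Block h m r d) : Prop :=
  (∀ i a b, B.WK i a b ∈ Fset p q) ∧ (∀ i a b, B.WQ i a b ∈ Fset p q) ∧
    (∀ i a b, B.WV i a b ∈ Fset p q) ∧ (∀ i a b, B.WO i a b ∈ Fset p q) ∧
    (∀ a b, B.W1 a b ∈ Fset p q) ∧ (∀ a b, B.W2 a b ∈ Fset p q) ∧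
    (∀ a, B.b1 a ∈ Fset p q) ∧ (∀ a, B.b2 a ∈ Fset p q)

/-- The attention layer
`AT(X) = X ⊕ (⊕_i W_i^O ⊗ ((W_i^V ⊗ X) ⊗ σ((W_i^K ⊗ X)ᵀ ⊗ (W_i^Q ⊗ X))))`. -/
def attnApply (p q : ℕ) {h m r d : ℕ} (B : Block h m r d) {n : ℕ} (X : Mat d n) : Mat d n :=
  madd p q X (fun a b =>
    fsum p q (fun i =>
      (mmul p q (toEF (B.WO i))
        (mmul p q (mmul p q (toEF (B.WV i)) X)
          (colSoftmax p q
            (mmul p q (fun u v => mmul p q (toEF (B.WK i)) X v u)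
              (mmul p q (toEF (B.WQ i)) X))))) a b))

/-- The feed-forward layer `FF(X) = X ⊕ (W₂ ⊗ ρ(W₁ ⊗ X ⊕ b₁1ᵀ) ⊕ b₂1ᵀ)`. -/
def ffApply (p q : ℕ) {h m r d : ℕ} (B : Block h m r d) {n : ℕ} (X : Mat d n) : Mat d n :=
  madd p q X
    (madd p q
      (mmul p q (toEF B.W2)
        (fun i j => frelu p q
          ((madd p q (mmul p q (toEF B.W1) X) (fun a _ => .fin (B.b1 a))) i j)))
      (fun a _ => .fin (B.b2 a)))

/-- One transformer block: `FF ∘ AT`. -/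
def Block.apply (p q : ℕ) {h m r d n : ℕ} (B : Block h m r d) (X : Mat d n) : Mat d n :=
  ffApply p q B (attnApply p q B X)

/-- Composition of a list of transformer blocks (applied from left to right). -/
def blocksApply (p q : ℕ) {h m r d n : ℕ} (L : List (Block h m r d)) (X : Mat d n) : Mat d n :=
  L.foldl (fun Y B => Block.apply p q B Y) X

/-- `f` is a floating-point transformer:
`f(X) = W_out ⊗ g(W_in ⊗ X ⊕ b_in 1ᵀ) ⊕ b_out 1ᵀ` with `g` a nonempty composition of
transformer blocks and all parameters finite floats. -/
def IsTransformer (p q din dout n : ℕ) (f : Mat din n → Mat dout n) : Prop :=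
  ∃ (h m r d : ℕ) (L : List (Block h m r d)) (Win : Fin d → Fin din → ℝ) (bin : Fin d → ℝ)
      (Wout : Fin dout → Fin d → ℝ) (bout : Fin dout → ℝ),
    0 < h ∧ 0 < m ∧ 0 < r ∧ 0 < d ∧ L ≠ [] ∧ (∀ B ∈ L, B.Valid p q) ∧
      (∀ i j, Win i j ∈ Fset p q) ∧ (∀ i, bin i ∈ Fset p q) ∧
      (∀ i j, Wout i j ∈ Fset p q) ∧ (∀ i, bout i ∈ Fset p q) ∧
      ∀ X : Mat din n,
        f X = madd p q
          (mmul p q (toEF Wout)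
            (blocksApply p q L
              (madd p q (mmul p q (toEF Win) X) (fun i _ => .fin (bin i)))))
          (fun i _ => .fin (bout i))

/-- Column permutation: column `j` of `permCols π X` is column `π j` of `X`. -/
def permCols {a n : ℕ} (π : Equiv.Perm (Fin n)) (X : Mat a n) : Mat a n := fun i j => X i (π j)

/-- The transposition `π_{(1,2)}^n` of the first two coordinates. -/
def swap12 (n : ℕ) (hn : 2 ≤ n) : Equiv.Perm (Fin n) :=
  Equiv.swap ⟨0, by omega⟩ ⟨1, by omega⟩

/-- The columns of `X` are pairwise distinct. -/
def DistinctCols {a n : ℕ} (X : Mat a n) : Prop :=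
  ∀ j k : Fin n, j ≠ k → ∃ i, X i j ≠ X i k

/-- `(α,β)`-similarity (with 1-based column index `i = j+1`). -/
def Similar {a n : ℕ} (α β : ℕ) (X Y : Mat a n) : Prop :=
  ∃ z1 z2 : Fin a → EF,
    (∀ j : Fin n, (j : ℕ) + 1 ≤ α → ∀ i, X i j = z1 i) ∧
    (∀ j : Fin n, α < (j : ℕ) + 1 → (j : ℕ) + 1 ≤ β → ∀ i, X i j = z2 i) ∧
    (∀ j : Fin n, (j : ℕ) + 1 < α → ∀ i, Y i j = z1 i) ∧
    (∀ j : Fin n, α ≤ (j : ℕ) + 1 → (j : ℕ) + 1 ≤ β → ∀ i, Y i j = z2 i) ∧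
    (∀ j : Fin n, β < (j : ℕ) + 1 → ∀ i, X i j = Y i j)

/-- The smallest float strictly greater than `x` (junk value if none exists). -/
def succF (p q : ℕ) (x : ℝ) : ℝ := sInf {y | y ∈ Fset p q ∧ x < y}

/-- Successor on extended floats: the smallest element of `𝔽 ∪ {+∞}` strictly above. -/
def succEF (p q : ℕ) : EF → EF
  | .fin r => if ∃ y ∈ Fset p q, r < y then .fin (succF p q r) else .pinf
  | e => e

/-- Floating-point affine transformation `φ(x) = W ⊗ x ⊕ b`. -/
def affApply (p q : ℕ) {a b : ℕ} (W : Fin b → Fin a → ℝ) (c : ℝ) (v : Fin a → EF) :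
    Fin b → EF :=
  fun i => fadd p q (fsum p q (fun j => fmul p q (.fin (W i j)) (v j))) (.fin c)

/-- All intermediate values of `φ(x) = W ⊗ x ⊕ b` on input `v`, including every
left-associative partial sum of the matrix–vector product, are finite. -/
def AffIntermFin (p q : ℕ) {a b : ℕ} (W : Fin b → Fin a → ℝ) (c : ℝ) (v : Fin a → EF) : Prop :=
  ∀ i : Fin b,
    (∀ k : ℕ,
      (fsuml p q (((List.finRange a).take k).map
        (fun j => fmul p q (.fin (W i j)) (v j)))).Finite) ∧
    (affApply p q W c v i).Finite

end
end FPT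


namespace FPTAux
open FPT

variable {p q : ℕ}

lemma zp (a b : ℤ) : (2:ℝ)^(a+b) = 2^a * 2^b := zpow_add₀ two_ne_zero a b
lemma zpn (n : ℕ) : (2:ℝ)^(n:ℤ) = 2^n := zpow_natCast 2 n
lemma zpos (a : ℤ) : (0:ℝ) < 2 ^ a := by positivity
lemma zmono {a b : ℤ} (h : a ≤ b) : (2:ℝ)^a ≤ 2^b := zpow_le_zpow_right₀ (by norm_num) h

lemma emax_ge (hpq : (p : ℤ) ≤ 2 ^ (q - 1) - 3) : (p:ℤ) + 2 ≤ emax q := by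
  unfold emax; linarith

lemma emin_le (hpq : (p : ℤ) ≤ 2 ^ (q - 1) - 3) : emin q ≤ 0 := by
  have : (0:ℤ) ≤ (p:ℤ) := Int.natCast_nonneg p
  unfold emin; linarith

lemma mem_Fset {m e : ℤ} (h1 : |m| ≤ 2^(p+1) - 1) (h2 : emin q ≤ e) (h3 : e ≤ emax q)
    (h4 : (2:ℤ)^p ≤ |m| ∨ e = emin q) : (m:ℝ) * (2:ℝ)^(e - (p:ℤ)) ∈ Fset p q :=
  ⟨m, e, h1, h2, h3, h4, rfl⟩

lemma mem_Fset_norm (hpq : (p : ℤ) ≤ 2 ^ (q - 1) - 3) {m E : ℤ}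
    (hm1 : 2^p ≤ m) (hm2 : m ≤ 2^(p+1)-1) (hE1 : 0 ≤ E) (hE2 : E ≤ (p:ℤ)+2) :
    (m:ℝ) * (2:ℝ)^(E - (p:ℤ)) ∈ Fset p q := by
  have hm0 : 0 ≤ m := le_trans (by positivity) hm1
  refine mem_Fset ?_ ?_ ?_ (Or.inl ?_)
  · rwa [abs_of_nonneg hm0]
  · exact le_trans (emin_le hpq) hE1
  · exact le_trans hE2 (emax_ge hpq)
  · rwa [abs_of_nonneg hm0]

lemma two_zpow_mem (hpq : (p : ℤ) ≤ 2 ^ (q - 1) - 3) {E : ℤ}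
    (hE1 : 0 ≤ E) (hE2 : E ≤ (p:ℤ)+2) : (2:ℝ)^E ∈ Fset p q := by
  have h := mem_Fset_norm (p := p) hpq (m := 2^p) (E := E) le_rfl
    (by have : (1:ℤ) ≤ 2^p := one_le_pow₀ (by norm_num); rw [pow_succ]; linarith) hE1 hE2
  have heq : ((2^p : ℤ):ℝ) * (2:ℝ)^(E - (p:ℤ)) = (2:ℝ)^E := by
    push_cast
    rw [← zpn p, ← zp]
    ring_nf
  rwa [heq] at h

lemma float_grid_or_small {E : ℤ} {z : ℝ} (hz : z ∈ Fset p q) :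
    (∃ k : ℤ, z = (k:ℝ) * 2^(E - (p:ℤ))) ∨ |z| ≤ 2^E - 2^(E - (p:ℤ) - 1) := by
  obtain ⟨m, e, h1, _, _, _, hval⟩ := hz
  rcases le_or_gt E e with h | h
  · left
    refine ⟨m * 2^(e - E).toNat, ?_⟩
    rw [hval]
    push_cast
    rw [← zpn, Int.toNat_of_nonneg (by omega), mul_assoc, ← zp]
    ring_nf
  · right
    rw [hval, abs_mul, abs_of_pos (zpos _)]
    have b1 : |(m:ℝ)| ≤ (2:ℝ)^(p+1) - 1 := by exact_mod_cast h1
    have b2 : (2:ℝ)^(e - (p:ℤ)) ≤ 2^(E - (p:ℤ) - 1) := zmono (by omega)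
    have key : (2:ℝ)^(p+1) * 2^(E - (p:ℤ) - 1) = 2^E := by
      rw [← zpn (p+1), ← zp]; congr 1; push_cast; ring
    calc |(m:ℝ)| * (2:ℝ)^(e - (p:ℤ)) ≤ ((2:ℝ)^(p+1) - 1) * 2^(E - (p:ℤ) - 1) := by
          have h2 : (1:ℝ) ≤ 2^(p+1) := one_le_pow₀ (by norm_num)
          apply mul_le_mul b1 b2 (le_of_lt (zpos _)) (by linarith)
      _ = 2^E - 2^(E - (p:ℤ) - 1) := by rw [sub_mul, key]; ring

end FPTAux

namespace FPTAux
open FPT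

variable {p q : ℕ}

lemma half_lt (E : ℤ) : (2:ℝ)^(E-(p:ℤ)-1) + 2^(E-(p:ℤ)-1) = 2^(E-(p:ℤ)) := by
  rw [show E-(p:ℤ) = (E-(p:ℤ)-1)+1 by ring, zp]; ring

lemma nearest {E : ℤ} {x y : ℝ} {n : ℤ}
    (hy : y = (n:ℝ) * 2^(E-(p:ℤ))) (hx : (2:ℝ)^E ≤ x) (hd : |x - y| ≤ 2^(E-(p:ℤ)-1)) :
    ∀ z ∈ Fset p q, |x - y| ≤ |x - z| := by
  intro z hz
  rcases float_grid_or_small (E := E) hz with ⟨k, rfl⟩ | hsmall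
  · by_cases hk : k = n
    · subst hk; rw [← hy]
    · have h1 : (2:ℝ)^(E-(p:ℤ)) ≤ |(k:ℝ)*2^(E-(p:ℤ)) - y| := by
        rw [hy, ← sub_mul, abs_mul, abs_of_pos (zpos _), ← Int.cast_sub]
        have : (1:ℝ) ≤ |((k - n : ℤ):ℝ)| := by
          rw [← Int.cast_abs]
          exact_mod_cast Int.one_le_abs (sub_ne_zero.2 hk)
        nlinarith [zpos (E-(p:ℤ))]
      have h2 := abs_sub_le ((k:ℝ)*2^(E-(p:ℤ))) x y
      have h3 := half_lt (p := p) E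
      have h4 : |x - (k:ℝ)*2^(E-(p:ℤ))| = |(k:ℝ)*2^(E-(p:ℤ)) - x| := abs_sub_comm _ _
      linarith
  · have h1 : x - z ≤ |x - z| := le_abs_self _
    have h2 : z ≤ |z| := le_abs_self _
    linarith

lemma nearest_strict {E : ℤ} {x y : ℝ} {n : ℤ}
    (hy : y = (n:ℝ) * 2^(E-(p:ℤ))) (hx : (2:ℝ)^E ≤ x) (hd : |x - y| < 2^(E-(p:ℤ)-1)) :
    ∀ z ∈ Fset p q, |x - z| = |x - y| → z = y := by
  intro z hz heq
  rcases float_grid_or_small (E := E) hz with ⟨k, rfl⟩ | hsmall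
  · by_cases hk : k = n
    · subst hk; rw [← hy]
    · exfalso
      have h1 : (2:ℝ)^(E-(p:ℤ)) ≤ |(k:ℝ)*2^(E-(p:ℤ)) - y| := by
        rw [hy, ← sub_mul, abs_mul, abs_of_pos (zpos _), ← Int.cast_sub]
        have : (1:ℝ) ≤ |((k - n : ℤ):ℝ)| := by
          rw [← Int.cast_abs]
          exact_mod_cast Int.one_le_abs (sub_ne_zero.2 hk)
        nlinarith [zpos (E-(p:ℤ))]
      have h2 := abs_sub_le ((k:ℝ)*2^(E-(p:ℤ))) x y
      have h3 := half_lt (p := p) E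
      have h4 : |x - (k:ℝ)*2^(E-(p:ℤ))| = |(k:ℝ)*2^(E-(p:ℤ)) - x| := abs_sub_comm _ _
      linarith
  · exfalso
    have h1 : x - z ≤ |x - z| := le_abs_self _
    have h2 : z ≤ |z| := le_abs_self _
    linarith

lemma thr_big (hp : 2 ≤ p) (hpq : (p : ℤ) ≤ 2 ^ (q - 1) - 3) :
    (2:ℝ)^((p:ℤ)+2) + 2 < thr p q := by
  unfold thr Omega
  have h1 : (2:ℝ)^(-(p:ℤ)) ≤ 1/4 := by
    have := zmono (show -(p:ℤ) ≤ -2 by omega)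
    norm_num at this ⊢
    linarith
  have h2 : (2:ℝ)^((p:ℤ)+2) ≤ 2^(emax q) := zmono (emax_ge hpq)
  have h3 : (0:ℝ) < 2^(emax q - (p:ℤ) - 1) := zpos _
  have h4 : (4:ℝ) ≤ 2^((p:ℤ)+2) := by
    have := zmono (show (2:ℤ) ≤ (p:ℤ)+2 by omega)
    norm_num at this; linarith
  nlinarith

lemma rnd_eq (hp : 2 ≤ p) (hpq : (p : ℤ) ≤ 2 ^ (q - 1) - 3) {E : ℤ} {x y : ℝ} {n : ℤ}
    (hy : y = (n:ℝ) * 2^(E-(p:ℤ))) (hyF : y ∈ Fset p q) (hx : (2:ℝ)^E ≤ x)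
    (hE : 0 ≤ E) (hxthr : x ≤ 2^((p:ℤ)+2) + 2)
    (hd : |x - y| < 2^(E-(p:ℤ)-1)) : rnd p q x = .fin y := by
  have hx0 : (0:ℝ) < x := lt_of_lt_of_le (zpos E) hx
  have hthr := thr_big hp hpq
  have hthr0 : (0:ℝ) < thr p q := by
    have := zpos ((p:ℤ)+2); linarith
  unfold rnd
  rw [if_neg (by linarith), if_neg (by linarith)]
  have hR : RoundsTo p q x y :=
    ⟨hyF, nearest hy hx (le_of_lt hd), Or.inl (nearest_strict hy hx hd)⟩
  have hEps := Classical.epsilon_spec (⟨y, hR⟩ : ∃ u, RoundsTo p q x u)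
  obtain ⟨hF', hmin', -⟩ := hEps
  have h1 : |x - Classical.epsilon (RoundsTo p q x)| = |x - y| :=
    le_antisymm (hmin' y hyF) (nearest hy hx (le_of_lt hd) _ hF')
  rw [nearest_strict hy hx hd _ hF' h1]

end FPTAux

namespace FPTAux
open FPT

variable {p q : ℕ}

lemma no_even_rep {M E : ℤ} (hModd : M % 2 = 1) (hM : (2:ℤ)^p ≤ M) :
    ¬ EvenMantissa p q ((M:ℝ) * 2^(E - (p:ℤ))) := by
  rintro ⟨m, e, h1, -, -, -, hval, hdvd⟩
  have hM0 : (0:ℤ) < M := lt_of_lt_of_le (by positivity) hM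
  rcases le_or_gt e E with h | h
  · have key : (m:ℝ) = ((M * 2^(E-e).toNat : ℤ):ℝ) := by
      have hne : (2:ℝ)^(e-(p:ℤ)) ≠ 0 := ne_of_gt (zpos _)
      apply mul_right_cancel₀ hne
      rw [← hval]
      push_cast
      rw [← zpn, Int.toNat_of_nonneg (by omega), mul_assoc, ← zp]
      congr 2
      ring
    have keyZ : m = M * 2^(E-e).toNat := Int.cast_injective key
    rcases eq_or_lt_of_le h with he | he
    · subst he
      simp at keyZ
      omega
    · have hk : 1 ≤ (E-e).toNat := by omega
      have h2 : (2:ℤ) ≤ 2^(E-e).toNat := by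
        calc (2:ℤ) = 2^1 := by norm_num
        _ ≤ 2^(E-e).toNat := pow_le_pow_right₀ (by norm_num) hk
      have hmabs : m ≤ |m| := le_abs_self m
      have hbig : 2 * M ≤ m := by rw [keyZ]; nlinarith
      have hsmall : |m| ≤ 2^(p+1) - 1 := h1
      have : (2:ℤ)^(p+1) = 2 * 2^p := by ring
      omega
  · have key : (M:ℝ) = ((m * 2^(e-E).toNat : ℤ):ℝ) := by
      have hne : (2:ℝ)^(E-(p:ℤ)) ≠ 0 := ne_of_gt (zpos _)
      apply mul_right_cancel₀ hne
      rw [hval]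
      push_cast
      rw [← zpn, Int.toNat_of_nonneg (by omega), mul_assoc, ← zp]
      congr 2
      ring
    have keyZ : M = m * 2^(e-E).toNat := Int.cast_injective key
    obtain ⟨j, hj⟩ : ∃ j, (e-E).toNat = j + 1 := ⟨(e-E).toNat - 1, by omega⟩
    have : (2:ℤ) ∣ M := ⟨m * 2^j, by rw [keyZ, hj]; ring⟩
    omega

lemma rnd_tie3 (hp : 2 ≤ p) (hpq : (p : ℤ) ≤ 2 ^ (q - 1) - 3) :
    rnd p q (3 + 3 * 2^(-(p:ℤ))) = .fin (3 + 2^(2-(p:ℤ))) := by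
  set t : ℝ := (2:ℝ)^(-(p:ℤ)) with htdef
  have ht0 : (0:ℝ) < t := zpos _
  have htp : (2:ℝ)^(p:ℤ) * t = 1 := by rw [htdef, ← zp]; simp
  have ht4 : t ≤ 1/4 := by
    have h := zmono (show -(p:ℤ) ≤ -2 by omega)
    rw [← htdef] at h
    norm_num at h; linarith
  have hg : (2:ℝ)^(1-(p:ℤ)) = 2 * t := by
    rw [show 1-(p:ℤ) = 1 + -(p:ℤ) by ring, zp, htdef]; norm_num
  have hg2 : (2:ℝ)^(2-(p:ℤ)) = 4 * t := by
    rw [show 2-(p:ℤ) = 2 + -(p:ℤ) by ring, zp, htdef]; norm_num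
  have hp1 : (2:ℝ)^((p-1:ℕ):ℤ) * (2*t) = 2^(p:ℤ) * t := by
    have h : (2:ℝ)^((p-1:ℕ):ℤ) * 2 = 2^(p:ℤ) := by
      rw [← zpow_add_one₀ (by norm_num : (2:ℝ) ≠ 0)]
      congr 1
      omega
    calc (2:ℝ)^((p-1:ℕ):ℤ) * (2*t) = ((2:ℝ)^((p-1:ℕ):ℤ) * 2) * t := by ring
    _ = 2^(p:ℤ) * t := by rw [h]
  set x : ℝ := 3 + 3 * t with hxdef
  set y : ℝ := 3 + 2^(2-(p:ℤ)) with hydef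
  have hy4 : y = 3 + 4 * t := by rw [hydef, hg2]
  have hn0 : ((3 * 2^(p-1) + 1 : ℤ):ℝ) * (2*t) = 3 + 2 * t := by
    push_cast
    rw [add_mul, ← zpn (p-1), mul_assoc 3, hp1, htp]
    ring
  have hyn : y = ((3 * 2^(p-1) + 2 : ℤ):ℝ) * 2^(1-(p:ℤ)) := by
    rw [hg, hy4]
    push_cast
    rw [add_mul, ← zpn (p-1), mul_assoc 3, hp1, htp]
    ring
  have hxlb : (2:ℝ)^(1:ℤ) ≤ x := by rw [hxdef]; norm_num; linarith
  have hdist : |x - y| = t := by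
    rw [hxdef, hy4, show 3 + 3*t - (3 + 4*t) = -t by ring, abs_neg, abs_of_pos ht0]
  have hhalf : (2:ℝ)^(1-(p:ℤ)-1) = t := by
    rw [htdef]
    congr 1
    ring
  -- y ∈ Fset and EvenMantissa y
  have hpow1 : (2:ℤ)^p = 2 * 2^(p-1) := by
    rw [← pow_succ']
    congr 1
    omega
  have hyF : y ∈ Fset p q := by
    rcases eq_or_lt_of_le hp with hp2 | hp3
    · have hyeq : y = (2:ℝ)^(2:ℤ) := by
        rw [hy4, htdef, ← hp2]
        norm_num
      rw [hyeq]
      exact two_zpow_mem hpq (by norm_num) (by omega)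
    · rw [hyn]
      refine mem_Fset_norm hpq ?_ ?_ (by norm_num) (by omega)
      · rw [hpow1]
        have : (0:ℤ) < 2^(p-1) := by positivity
        linarith
      · have h8 : (4:ℤ) ≤ 2^(p-1) := by
          calc (4:ℤ) = 2^2 := by norm_num
          _ ≤ 2^(p-1) := pow_le_pow_right₀ (by norm_num) (by omega)
        rw [pow_succ, hpow1]
        linarith
  have hyEven : EvenMantissa p q y := by
    rcases eq_or_lt_of_le hp with hp2 | hp3
    · refine ⟨4, 2, ?_, ?_, ?_, ?_, ?_, by norm_num⟩
      · rw [← hp2]; norm_num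
      · linarith [emin_le (p := p) hpq]
      · linarith [emax_ge hpq, Int.natCast_nonneg p]
      · left; rw [← hp2]; norm_num
      · rw [hy4, htdef, ← hp2]; norm_num
    · refine ⟨3 * 2^(p-1) + 2, 1, ?_, ?_, ?_, ?_, by rw [← hyn], ⟨3 * 2^(p-2) + 1, ?_⟩⟩
      · have h8 : (4:ℤ) ≤ 2^(p-1) := by
          calc (4:ℤ) = 2^2 := by norm_num
          _ ≤ 2^(p-1) := pow_le_pow_right₀ (by norm_num) (by omega)
        have : (0:ℤ) < 2^(p-1) := by positivity
        rw [abs_of_nonneg (by linarith), pow_succ, hpow1]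
        linarith
      · linarith [emin_le (p := p) hpq]
      · linarith [emax_ge hpq, Int.natCast_nonneg p]
      · left
        have : (0:ℤ) < 2^(p-1) := by positivity
        rw [abs_of_nonneg (by linarith), hpow1]
        linarith
      · have : (2:ℤ)^(p-1) = 2 * 2^(p-2) := by
          rw [← pow_succ']
          congr 1
          omega
        rw [this]
        ring
  -- rounding
  have hR : RoundsTo p q x y :=
    ⟨hyF, nearest hyn hxlb (by rw [hdist, hhalf]), Or.inr hyEven⟩
  have hthr := thr_big hp hpq
  have h4p : (4:ℝ) ≤ 2^((p:ℤ)+2) := by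
    have := zmono (show (2:ℤ) ≤ (p:ℤ)+2 by omega)
    norm_num at this; linarith
  have hthr0 : (0:ℝ) < thr p q := by linarith
  have hxthr : x < thr p q := by rw [hxdef]; linarith
  unfold rnd
  rw [if_neg (by linarith), if_neg (by rw [hxdef]; push_neg; linarith)]
  have hEps := Classical.epsilon_spec (⟨y, hR⟩ : ∃ u, RoundsTo p q x u)
  set u : ℝ := Classical.epsilon (RoundsTo p q x) with hudef
  obtain ⟨hF', hmin', halt'⟩ := hEps
  have hule : |x - u| ≤ t := hdist ▸ hmin' y hyF
  have hueq : u = y := by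
    rcases float_grid_or_small (E := 1) hF' with ⟨k, hk⟩ | hsmall
    · rw [hg] at hk
      obtain ⟨d, hddef⟩ : ∃ d : ℤ, k = d + (3 * 2^(p-1) + 1) :=
        ⟨k - (3 * 2^(p-1) + 1), by ring⟩
      have hkd : (k:ℝ) = (d:ℝ) + ((3 * 2^(p-1) + 1 : ℤ):ℝ) := by
        rw [hddef]; push_cast; ring
      have hu2 : u = (d:ℝ) * (2*t) + (3 + 2*t) := by
        rw [hk, hkd, add_mul, hn0]
      have habs : |t * (1 - 2*(d:ℝ))| ≤ t := by
        have : x - u = t * (1 - 2*(d:ℝ)) := by rw [hu2, hxdef]; ring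
        rwa [← this]
      rw [abs_mul, abs_of_pos ht0] at habs
      have hd1 : |1 - 2*(d:ℝ)| ≤ 1 := by
        by_contra hcon
        push_neg at hcon
        nlinarith
      rw [abs_le] at hd1
      have hd0 : d = 0 ∨ d = 1 := by
        have e1 : (0:ℝ) ≤ (d:ℝ) := by linarith
        have e2 : ((d:ℝ)) ≤ 1 := by linarith
        have f1 : (0:ℤ) ≤ d := by exact_mod_cast e1
        have f2 : d ≤ 1 := by exact_mod_cast e2
        omega
      rcases hd0 with h0 | h0
      · -- u is the lower float; contradiction with tie-breaking
        exfalso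
        have huval : u = 3 + 2*t := by rw [hu2, h0]; push_cast; ring
        have huy : u ≠ y := by rw [huval, hy4]; intro hcon; nlinarith
        have hxu : |x - u| = t := by
          rw [huval, hxdef, show 3 + 3*t - (3 + 2*t) = t by ring, abs_of_pos ht0]
        rcases halt' with huniq | heven
        · exact huy ((huniq y hyF (by rw [hdist, hxu])).symm)
        · have hurep : u = ((3 * 2^(p-1) + 1 : ℤ):ℝ) * 2^((1:ℤ) - (p:ℤ)) := by
            rw [huval, hg, hn0]
          rw [hurep] at heven
          refine no_even_rep (M := 3 * 2^(p-1) + 1) (E := 1) ?_ ?_ heven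
          · have : (2:ℤ) ∣ 2^(p-1) := dvd_pow_self 2 (by omega)
            omega
          · have : (0:ℤ) < 2^(p-1) := by positivity
            rw [hpow1]; linarith
      · rw [hu2, h0, hy4]; push_cast; ring
    · exfalso
      have h1 : x - u ≤ |x - u| := le_abs_self _
      have h2 : u ≤ |u| := le_abs_self _
      rw [hhalf] at hsmall
      have : (2:ℝ)^(1:ℤ) = 2 := by norm_num
      rw [this] at hsmall
      rw [hxdef] at h1
      linarith
  rw [hueq]

end FPTAux

namespace FPTAux
open FPT

variable {p q : ℕ}

lemma tpos : (0:ℝ) < 2^(-(p:ℤ)) := zpos _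

lemma t4 {p : ℕ} (hp : 2 ≤ p) : (2:ℝ)^(-(p:ℤ)) ≤ 1/4 := by
  calc (2:ℝ)^(-(p:ℤ)) ≤ (2:ℝ)^(-2:ℤ) := zmono (by omega)
  _ = 1/4 := by norm_num

lemma four_le {p : ℕ} (hp : 2 ≤ p) : (4:ℝ) ≤ (2:ℝ)^((p:ℤ)) := by
  calc (4:ℝ) = (2:ℝ)^((2:ℤ)) := by norm_num
  _ ≤ _ := zmono (by omega)

lemma cast_pow (n : ℕ) : ((2^n : ℤ):ℝ) = (2:ℝ)^((n:ℤ)) := by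
  rw [zpn]; push_cast; ring

lemma npow_p : (2:ℝ)^p = 2^((p:ℤ)) := (zpn p).symm

lemma zp1 : (2:ℝ)^((p:ℤ)+1) = 2 * 2^((p:ℤ)) := by rw [zp]; ring
lemma zp2 : (2:ℝ)^((p:ℤ)+2) = 4 * 2^((p:ℤ)) := by
  rw [zp]
  have : (2:ℝ)^(2:ℤ) = 4 := by norm_num
  rw [this]; ring

lemma hKZ {p : ℕ} (hp : 2 ≤ p) : (4:ℤ) ≤ 2^p := by
  calc (4:ℤ) = 2^2 := by norm_num
  _ ≤ 2^p := pow_le_pow_right₀ (by norm_num) hp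

lemma step_int (hp : 2 ≤ p) (hpq : (p : ℤ) ≤ 2 ^ (q - 1) - 3) {N : ℤ}
    (hN1 : 2^p + 1 ≤ N) (hN2 : N ≤ 2^(p+1)) {x : ℝ}
    (hx : x = (N:ℝ) + 2^(-(p:ℤ))) : rnd p q x = .fin (N:ℝ) := by
  have hK := hKZ hp
  have hpow : (2:ℤ)^(p+1) = 2 * 2^p := by ring
  have ht0 : (0:ℝ) < 2^(-(p:ℤ)) := tpos
  have ht4 := t4 hp
  have h4 := four_le hp
  have hNR : ((2^p:ℤ):ℝ) + 1 ≤ (N:ℝ) := by exact_mod_cast hN1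
  have hNR2 : (N:ℝ) ≤ ((2^(p+1):ℤ):ℝ) := by exact_mod_cast hN2
  rw [cast_pow] at hNR
  rw [cast_pow, show (((p+1:ℕ)):ℤ) = (p:ℤ)+1 from by push_cast; ring, zp1] at hNR2
  have hyF : ((N:ℝ)) ∈ Fset p q := by
    rcases eq_or_lt_of_le hN2 with he | hlt
    · have : (N:ℝ) = (2:ℝ)^((p:ℤ)+1) := by
        rw [he, cast_pow]
        exact congrArg (2^· : ℤ → ℝ) (by push_cast; ring)
      rw [this]
      exact two_zpow_mem hpq (by positivity) (by omega)
    · have hmem := mem_Fset_norm hpq (m := N) (E := (p:ℤ)) (by omega) (by omega)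
        (Int.natCast_nonneg p) (by omega)
      simpa using hmem
  apply rnd_eq hp hpq (E := (p:ℤ)) (n := N) (by norm_num) hyF ?_ (Int.natCast_nonneg p) ?_ ?_
  · rw [hx]; linarith
  · rw [hx, zp2]; linarith
  · rw [hx, show (N:ℝ) + 2^(-(p:ℤ)) - N = 2^(-(p:ℤ)) by ring, abs_of_pos ht0,
      show (p:ℤ)-(p:ℤ)-1 = -1 by ring]
    have : (2:ℝ)^(-1:ℤ) = 1/2 := by norm_num
    rw [this]; linarith

lemma step_even (hp : 2 ≤ p) (hpq : (p : ℤ) ≤ 2 ^ (q - 1) - 3) {N : ℤ}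
    (hN1 : 2^p ≤ N) (hN2 : N ≤ 2^(p+1) - 1) {x y : ℝ}
    (hx : x = 2*(N:ℝ) + 1 + 2^(-(p:ℤ))) (hy : y = 2*(N:ℝ) + 2) : rnd p q x = .fin y := by
  have hK := hKZ hp
  have hpow : (2:ℤ)^(p+1) = 2 * 2^p := by ring
  have ht0 : (0:ℝ) < 2^(-(p:ℤ)) := tpos
  have ht4 := t4 hp
  have h4 := four_le hp
  have hNR : (2:ℝ)^((p:ℤ)) ≤ (N:ℝ) := by
    have : ((2^p:ℤ):ℝ) ≤ (N:ℝ) := by exact_mod_cast hN1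
    rwa [cast_pow] at this
  have hNR2 : (N:ℝ) ≤ 2 * 2^((p:ℤ)) - 1 := by
    have h : ((N:ℤ):ℝ) ≤ ((2^(p+1) - 1:ℤ):ℝ) := by exact_mod_cast hN2
    push_cast at h
    rw [pow_succ, npow_p] at h; linarith
  have hgrid : (2:ℝ)^((p:ℤ)+1-(p:ℤ)) = 2 := by norm_num
  have hyg : y = ((N+1:ℤ):ℝ) * 2^((p:ℤ)+1-(p:ℤ)) := by
    rw [hy, hgrid]; push_cast; ring
  have hyF : y ∈ Fset p q := by
    rcases eq_or_lt_of_le hN2 with he | hlt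
    · have hyv : y = (2:ℝ)^((p:ℤ)+2) := by
        rw [hy, he, zp2]
        push_cast
        rw [pow_succ, npow_p]
        ring
      rw [hyv]
      exact two_zpow_mem hpq (by positivity) (by omega)
    · have hmem := mem_Fset_norm hpq (m := N+1) (E := (p:ℤ)+1) (by omega) (by omega)
        (by omega) (by omega)
      rwa [← hyg] at hmem
  apply rnd_eq hp hpq (E := (p:ℤ)+1) (n := N+1) hyg hyF ?_ (by omega) ?_ ?_
  · rw [hx, zp1]; linarith
  · rw [hx, zp2]; linarith
  · rw [hx, hy, show 2*(N:ℝ) + 1 + 2^(-(p:ℤ)) - (2*(N:ℝ)+2) = -(1 - 2^(-(p:ℤ))) by ring,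
      abs_neg, abs_of_pos (by linarith), show (p:ℤ)+1-(p:ℤ)-1 = 0 by ring]
    have : (2:ℝ)^(0:ℤ) = 1 := by norm_num
    rw [this]; linarith

lemma step_sat (hp : 2 ≤ p) (hpq : (p : ℤ) ≤ 2 ^ (q - 1) - 3) {x : ℝ}
    (hx : x = (2:ℝ)^((p:ℤ)+2) + 1 + 2^(-(p:ℤ))) : rnd p q x = .fin ((2:ℝ)^((p:ℤ)+2)) := by
  have ht0 : (0:ℝ) < 2^(-(p:ℤ)) := tpos
  have ht4 := t4 hp
  have hyg : (2:ℝ)^((p:ℤ)+2) = ((2^p:ℤ):ℝ) * 2^((p:ℤ)+2-(p:ℤ)) := by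
    rw [cast_pow, ← zp]; congr 1; ring
  have hyF : (2:ℝ)^((p:ℤ)+2) ∈ Fset p q :=
    two_zpow_mem hpq (by positivity) (by omega)
  apply rnd_eq hp hpq (E := (p:ℤ)+2) (n := 2^p) hyg hyF ?_ (by omega) ?_ ?_
  · rw [hx]; linarith
  · rw [hx]; linarith
  · rw [hx, show (2:ℝ)^((p:ℤ)+2) + 1 + 2^(-(p:ℤ)) - 2^((p:ℤ)+2) = 1 + 2^(-(p:ℤ)) by ring,
      abs_of_pos (by linarith), show (p:ℤ)+2-(p:ℤ)-1 = 1 by ring]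
    have : (2:ℝ)^(1:ℤ) = 2 := by norm_num
    rw [this]; linarith

end FPTAux

namespace FPTAux
open FPT

variable {p q : ℕ}

lemma tp : (2:ℝ)^((p:ℤ)) * 2^(-(p:ℤ)) = 1 := by rw [← zp]; simp

lemma cast_npow (L : ℕ) : ((2^L:ℕ):ℝ) = (2:ℝ)^((L:ℤ)) := by
  push_cast
  exact (zpn L).symm

lemma hg1 : (2:ℝ)^(1-(p:ℤ)) = 2 * 2^(-(p:ℤ)) := by
  rw [show (1:ℤ)-(p:ℤ) = 1 + -(p:ℤ) by ring, zp]
  norm_num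

lemma hg2' : (2:ℝ)^(2-(p:ℤ)) = 4 * 2^(-(p:ℤ)) := by
  rw [show (2:ℤ)-(p:ℤ) = 2 + -(p:ℤ) by ring, zp]
  have : (2:ℝ)^(2:ℤ) = 4 := by norm_num
  rw [this]

lemma step1 (hp : 2 ≤ p) (hpq : (p : ℤ) ≤ 2 ^ (q - 1) - 3) :
    rnd p q ((1 + 2^(-(p:ℤ))) + (1 + 2^(-(p:ℤ)))) = .fin (2 + 2^(1-(p:ℤ))) := by
  have hK := hKZ hp
  have ht0 : (0:ℝ) < 2^(-(p:ℤ)) := tpos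
  have ht4 := t4 hp
  have h4 := four_le hp
  have hy : (2:ℝ) + 2^(1-(p:ℤ)) = ((2^p+1:ℤ):ℝ) * 2^(1-(p:ℤ)) := by
    rw [hg1]
    push_cast [cast_pow]
    calc (2:ℝ) + 2*2^(-(p:ℤ)) = 2*(2^((p:ℤ))*2^(-(p:ℤ))) + 2*2^(-(p:ℤ)) := by rw [tp]; ring
    _ = (2^((p:ℤ))+1) * (2*2^(-(p:ℤ))) := by ring
  have hyF : (2:ℝ) + 2^(1-(p:ℤ)) ∈ Fset p q := by
    rw [hy]
    exact mem_Fset_norm hpq (by omega) (by rw [pow_succ]; omega) (by norm_num) (by omega)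
  apply rnd_eq hp hpq (E := (1:ℤ)) (n := 2^p+1) hy hyF ?_ (by norm_num) ?_ ?_
  · have : (2:ℝ)^(1:ℤ) = 2 := by norm_num
    rw [this]; linarith
  · rw [zp2]; linarith
  · rw [hg1, show (1:ℝ) + 2^(-(p:ℤ)) + (1 + 2^(-(p:ℤ))) - (2 + 2*2^(-(p:ℤ))) = 0 by ring,
      show (1:ℤ)-(p:ℤ)-1 = -(p:ℤ) by ring, abs_zero]
    exact ht0

lemma step3 (hp : 2 ≤ p) (hpq : (p : ℤ) ≤ 2 ^ (q - 1) - 3) :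
    rnd p q (3 + 2^(2-(p:ℤ)) + (1 + 2^(-(p:ℤ)))) = .fin (4 + 2^(2-(p:ℤ))) := by
  have hK := hKZ hp
  have ht0 : (0:ℝ) < 2^(-(p:ℤ)) := tpos
  have ht4 := t4 hp
  have h4 := four_le hp
  have hy : (4:ℝ) + 2^(2-(p:ℤ)) = ((2^p+1:ℤ):ℝ) * 2^(2-(p:ℤ)) := by
    rw [hg2']
    push_cast [cast_pow]
    calc (4:ℝ) + 4*2^(-(p:ℤ)) = 4*(2^((p:ℤ))*2^(-(p:ℤ))) + 4*2^(-(p:ℤ)) := by rw [tp]; ring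
    _ = (2^((p:ℤ))+1) * (4*2^(-(p:ℤ))) := by ring
  have hyF : (4:ℝ) + 2^(2-(p:ℤ)) ∈ Fset p q := by
    rw [hy]
    exact mem_Fset_norm hpq (by omega) (by rw [pow_succ]; omega) (by norm_num) (by omega)
  apply rnd_eq hp hpq (E := (2:ℤ)) (n := 2^p+1) hy hyF ?_ (by norm_num) ?_ ?_
  · have : (2:ℝ)^(2:ℤ) = 4 := by norm_num
    rw [this, hg2']; linarith
  · rw [zp2, hg2']; linarith
  · rw [hg2', show (3:ℝ) + 4*2^(-(p:ℤ)) + (1 + 2^(-(p:ℤ))) - (4 + 4*2^(-(p:ℤ))) = 2^(-(p:ℤ)) by ring,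
      abs_of_pos ht0, show (2:ℤ)-(p:ℤ)-1 = 1-(p:ℤ) by ring, hg1]
    linarith

lemma step_A (hp : 2 ≤ p) (hpq : (p : ℤ) ≤ 2 ^ (q - 1) - 3) {k L : ℕ}
    (hL : 2 ≤ L) (hLp : L + 1 ≤ p) (hk1 : 2^L ≤ k) (hk2 : k + 1 < 2^(L+1)) :
    rnd p q (((k:ℝ) + 2^((L:ℤ)-(p:ℤ))) + (1 + 2^(-(p:ℤ))))
      = .fin (((k:ℝ)+1) + 2^((L:ℤ)-(p:ℤ))) := by
  have hK := hKZ hp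
  have ht0 : (0:ℝ) < 2^(-(p:ℤ)) := tpos
  have ht4 := t4 hp
  have h4 := four_le hp
  -- integer facts
  set A : ℤ := 2^(p-L) with hA
  have hA2 : (2:ℤ) ≤ A := by
    rw [hA]
    calc (2:ℤ) = 2^1 := by norm_num
    _ ≤ 2^(p-L) := pow_le_pow_right₀ (by norm_num) (by omega)
  have hA0 : (0:ℤ) < A := by omega
  have hpA : (2:ℤ)^p = 2^L * A := by rw [hA, ← pow_add]; congr 1; omega
  have hp1A : (2:ℤ)^(p+1) = 2^(L+1) * A := by rw [hA, ← pow_add]; congr 1; omega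
  have hk1Z : (2:ℤ)^L ≤ (k:ℤ) := by exact_mod_cast hk1
  have hk2Z : (k:ℤ) + 1 ≤ 2^(L+1) - 1 := by
    have h : (k:ℤ) + 1 < 2^(L+1) := by exact_mod_cast hk2
    omega
  set n : ℤ := ((k:ℤ)+1) * A + 1 with hn
  -- real identities
  have hone : ((A:ℤ):ℝ) * 2^((L:ℤ)-(p:ℤ)) = 1 := by
    rw [hA, cast_pow, ← zp]
    rw [show (((p-L:ℕ)):ℤ) + ((L:ℤ)-(p:ℤ)) = 0 from by omega]
    norm_num
  have hy : ((k:ℝ)+1) + 2^((L:ℤ)-(p:ℤ)) = ((n:ℤ):ℝ) * 2^((L:ℤ)-(p:ℤ)) := by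
    rw [hn]
    push_cast
    linear_combination (-(k:ℝ)-1) * hone
  have hyF : ((k:ℝ)+1) + 2^((L:ℤ)-(p:ℤ)) ∈ Fset p q := by
    rw [hy]
    refine mem_Fset_norm hpq ?_ ?_ (by omega) (by omega)
    · have h2 : ((2:ℤ)^L + 1) * A ≤ ((k:ℤ)+1) * A :=
        mul_le_mul_of_nonneg_right (by omega) (by omega)
      rw [hn]
      nlinarith
    · have h1 : ((k:ℤ)+1) * A ≤ ((2:ℤ)^(L+1) - 1) * A :=
        mul_le_mul_of_nonneg_right (by omega) (by omega)
      rw [hn, pow_succ]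
      rw [pow_succ] at hp1A
      nlinarith
  have hkR : ((2:ℝ))^((L:ℤ)) ≤ (k:ℝ) := by
    have h : ((2^L:ℕ):ℝ) ≤ (k:ℝ) := by exact_mod_cast hk1
    rwa [cast_npow] at h
  have hkR2 : (k:ℝ) ≤ (2:ℝ)^((p:ℤ)) := by
    have hkN : k ≤ 2^p := by
      have h1 : 2^(L+1) ≤ 2^p := Nat.pow_le_pow_right (by norm_num) hLp
      omega
    have h : (k:ℝ) ≤ ((2^p:ℕ):ℝ) := by exact_mod_cast hkN
    rwa [cast_npow] at h
  have hsmall : (2:ℝ)^((L:ℤ)-(p:ℤ)) ≤ 1 := by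
    have h := zmono (show (L:ℤ)-(p:ℤ) ≤ 0 by omega)
    simpa using h
  apply rnd_eq hp hpq (E := (L:ℤ)) (n := n) hy hyF ?_ (by omega) ?_ ?_
  · linarith [zpos ((L:ℤ)-(p:ℤ))]
  · rw [zp2]; linarith
  · rw [show ((k:ℝ) + 2^((L:ℤ)-(p:ℤ))) + (1 + 2^(-(p:ℤ))) - (((k:ℝ)+1) + 2^((L:ℤ)-(p:ℤ)))
        = 2^(-(p:ℤ)) by ring, abs_of_pos ht0]
    have h := zmono (show (1:ℤ)-(p:ℤ) ≤ (L:ℤ)-(p:ℤ)-1 by omega)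
    rw [hg1] at h
    linarith

lemma step_Bdry (hp : 2 ≤ p) (hpq : (p : ℤ) ≤ 2 ^ (q - 1) - 3) {L : ℕ}
    (hL : 2 ≤ L) (hLp : L + 1 ≤ p) {x : ℝ}
    (hx : x = (2:ℝ)^((L:ℤ)) * 2 - 1 + 2^((L:ℤ)-(p:ℤ)) + (1 + 2^(-(p:ℤ)))) :
    rnd p q x = .fin ((2:ℝ)^((L:ℤ)) * 2 + 2^(((L:ℤ)+1)-(p:ℤ))) := by
  have hK := hKZ hp
  have ht0 : (0:ℝ) < 2^(-(p:ℤ)) := tpos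
  have ht4 := t4 hp
  have h4 := four_le hp
  have hL1 : (2:ℝ)^((L:ℤ)+1) = 2^((L:ℤ)) * 2 := by
    rw [zp]; norm_num
  have h2LP : (2:ℝ)^(((L:ℤ)+1)-(p:ℤ)) = 2 * 2^((L:ℤ)-(p:ℤ)) := by
    rw [show ((L:ℤ)+1)-(p:ℤ) = ((L:ℤ)-(p:ℤ))+1 by ring, zp]
    norm_num
    ring
  have htlt : (2:ℝ)^(-(p:ℤ)) < 2^((L:ℤ)-(p:ℤ)) :=
    zpow_lt_zpow_right₀ (by norm_num) (by omega)
  have e1 : (2:ℝ)^((p:ℤ)) * 2^(((L:ℤ)+1)-(p:ℤ)) = 2^((L:ℤ)) * 2 := by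
    rw [← zp, show (p:ℤ)+(((L:ℤ)+1)-(p:ℤ)) = (L:ℤ)+1 by ring, hL1]
  have hy : (2:ℝ)^((L:ℤ)) * 2 + 2^(((L:ℤ)+1)-(p:ℤ)) = ((2^p+1:ℤ):ℝ) * 2^(((L:ℤ)+1)-(p:ℤ)) := by
    push_cast
    rw [npow_p, add_mul, one_mul, e1]
  have hyF : (2:ℝ)^((L:ℤ)) * 2 + 2^(((L:ℤ)+1)-(p:ℤ)) ∈ Fset p q := by
    rw [hy]
    exact mem_Fset_norm hpq (by omega) (by rw [pow_succ]; omega) (by omega) (by omega)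
  have hB : (2:ℝ)^((L:ℤ)) * 2 ≤ 2^((p:ℤ)) := by
    have h := zmono (show (L:ℤ)+1 ≤ (p:ℤ) by omega)
    rwa [hL1] at h
  have hsmall : (2:ℝ)^((L:ℤ)-(p:ℤ)) ≤ 1 := by
    have h := zmono (show (L:ℤ)-(p:ℤ) ≤ 0 by omega)
    simpa using h
  apply rnd_eq hp hpq (E := (L:ℤ)+1) (n := 2^p+1) hy hyF ?_ (by omega) ?_ ?_
  · rw [hx, hL1]; linarith [zpos ((L:ℤ)-(p:ℤ))]
  · rw [hx, zp2]; linarith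
  · rw [hx, h2LP, show (2:ℝ)^((L:ℤ))*2 - 1 + 2^((L:ℤ)-(p:ℤ)) + (1 + 2^(-(p:ℤ)))
        - ((2:ℝ)^((L:ℤ))*2 + 2*2^((L:ℤ)-(p:ℤ)))
        = -(2^((L:ℤ)-(p:ℤ)) - 2^(-(p:ℤ))) by ring, abs_neg,
      abs_of_pos (by linarith), show ((L:ℤ)+1)-(p:ℤ)-1 = (L:ℤ)-(p:ℤ) by ring]
    linarith

lemma fsuml_succ (x : EF) (j : ℕ) :
    fsuml p q (List.replicate (j+2) x) = fadd p q (fsuml p q (List.replicate (j+1) x)) x := by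
  show ((List.replicate (j+1) x).foldl (fadd p q) x)
      = fadd p q ((List.replicate j x).foldl (fadd p q) x) x
  rw [List.replicate_succ' (n := j), List.foldl_append]
  rfl

end FPTAux

namespace FPTAux
open FPT

variable {p q : ℕ}

noncomputable def val (p : ℕ) (k : ℕ) : ℝ :=
  if k = 0 then 0
  else if k = 1 then 1 + (2:ℝ)^(-(p:ℤ))
  else if k = 2 then 2 + (2:ℝ)^((1:ℤ)-(p:ℤ))
  else if k = 3 then 3 + (2:ℝ)^((2:ℤ)-(p:ℤ))
  else if k ≤ 2^p then (k:ℝ) + (2:ℝ)^((Nat.log 2 k : ℤ)-(p:ℤ))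
  else if k ≤ 2^(p+1) - 1 then (k:ℝ) + 1
  else if k ≤ 3*2^p - 1 then (2:ℝ)^(p+1) + 2*((k:ℝ) - 2^(p+1) + 1)
  else (2:ℝ)^(p+2)

lemma hKN (hp : 2 ≤ p) : 4 ≤ 2^p := by
  calc 4 = 2^2 := rfl
  _ ≤ 2^p := Nat.pow_le_pow_right (by norm_num) hp

lemma hpowN : (2:ℕ)^(p+1) = 2*2^p := by rw [pow_succ]; ring

lemma val_0 : val p 0 = 0 := by simp [val]
lemma val_1 : val p 1 = 1 + (2:ℝ)^(-(p:ℤ)) := by simp [val]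
lemma val_2 : val p 2 = 2 + (2:ℝ)^((1:ℤ)-(p:ℤ)) := by simp [val]
lemma val_3 : val p 3 = 3 + (2:ℝ)^((2:ℤ)-(p:ℤ)) := by simp [val]

lemma val_A {k : ℕ} (h4 : 4 ≤ k) (h : k ≤ 2^p) :
    val p k = (k:ℝ) + (2:ℝ)^((Nat.log 2 k : ℤ)-(p:ℤ)) := by
  unfold val
  rw [if_neg (by omega), if_neg (by omega), if_neg (by omega), if_neg (by omega), if_pos h]

lemma val_B (hp : 2 ≤ p) {k : ℕ} (h1 : 2^p + 1 ≤ k) (h2 : k ≤ 2^(p+1) - 1) :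
    val p k = (k:ℝ) + 1 := by
  have hK := hKN hp
  have hpow := hpowN (p := p)
  unfold val
  rw [if_neg (by omega), if_neg (by omega), if_neg (by omega), if_neg (by omega),
    if_neg (by omega), if_pos h2]

lemma val_C (hp : 2 ≤ p) {k : ℕ} (h1 : 2^(p+1) ≤ k) (h2 : k ≤ 3*2^p - 1) :
    val p k = (2:ℝ)^(p+1) + 2*((k:ℝ) - 2^(p+1) + 1) := by
  have hK := hKN hp
  have hpow := hpowN (p := p)
  unfold val
  rw [if_neg (by omega), if_neg (by omega), if_neg (by omega), if_neg (by omega),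
    if_neg (by omega), if_neg (by omega), if_pos h2]

lemma val_top (hp : 2 ≤ p) {k : ℕ} (h : 3*2^p - 1 < k) : val p k = (2:ℝ)^(p+2) := by
  have hK := hKN hp
  have hpow := hpowN (p := p)
  unfold val
  rw [if_neg (by omega), if_neg (by omega), if_neg (by omega), if_neg (by omega),
    if_neg (by omega), if_neg (by omega), if_neg (by omega)]

lemma npow_p2 : (2:ℝ)^(p+2) = 2^((p:ℤ)+2) := by
  rw [← zpn (p+2)]
  norm_cast

lemma npow_p1' : (2:ℝ)^(p+1) = 2^((p:ℤ)+1) := by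
  rw [← zpn (p+1)]
  norm_cast

lemma val_ge_sat (hp : 2 ≤ p) {k : ℕ} (h : 3*2^p - 1 ≤ k) : val p k = (2:ℝ)^(p+2) := by
  have hK := hKN hp
  have hpow := hpowN (p := p)
  rcases eq_or_lt_of_le h with he | hlt
  · rw [val_C hp (by omega) (by omega)]
    have hcast : ((k:ℕ):ℝ) = 3*(2:ℝ)^p - 1 := by
      rw [← he]
      push_cast [Nat.cast_sub (by omega : 1 ≤ 3*2^p)]
      ring
    rw [hcast, pow_succ, pow_succ, pow_succ]
    ring
  · exact val_top hp hlt

lemma val_le_A (hp : 2 ≤ p) {k : ℕ} (h4 : 4 ≤ k) (h : k ≤ 2^p) : val p k ≤ (k:ℝ) + 1 := by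
  rw [val_A h4 h]
  have hlog : Nat.log 2 k ≤ p := by
    have := Nat.log_mono_right (b := 2) h
    rwa [Nat.log_pow (by norm_num) p] at this
  have := zmono (show (Nat.log 2 k : ℤ) - (p:ℤ) ≤ 0 by omega)
  rw [zpow_zero] at this
  linarith

lemma val_lt_succ (hp : 2 ≤ p) {k : ℕ} (h : k + 1 ≤ 3*2^p - 1) : val p k < val p (k+1) := by
  have hK := hKN hp
  have hpow := hpowN (p := p)
  have ht0 : (0:ℝ) < 2^(-(p:ℤ)) := tpos
  have ht4 := t4 hp
  rcases Nat.lt_or_ge k 4 with hk4 | hk4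
  · interval_cases k
    · rw [val_0, val_1]; linarith
    · rw [val_1, val_2, hg1]; linarith
    · rw [val_2, val_3, hg1, hg2']; linarith
    · rw [val_3, val_A (by norm_num) (by omega)]
      have hlog : Nat.log 2 4 = 2 := Nat.log_eq_of_pow_le_of_lt_pow (by norm_num) (by norm_num)
      rw [hlog]
      push_cast
      rw [hg2']
      norm_num
  · rcases Nat.lt_or_ge (k+1) (2^p + 1) with hA | hB
    · -- k+1 ≤ 2^p
      have h1 := val_le_A hp hk4 (by omega)
      rw [val_A (k := k+1) (by omega) (by omega)]
      have := zpos ((Nat.log 2 (k+1) : ℤ) - (p:ℤ))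
      push_cast
      linarith
    · rcases Nat.lt_or_ge k (2^p + 1) with hA2 | hB2
      · -- k = 2^p
        have hkeq : k = 2^p := by omega
        have h1 := val_le_A hp hk4 (by omega)
        rw [val_B (k := k+1) hp (by omega) (by omega)]
        push_cast
        linarith
      · rcases Nat.lt_or_ge (k+1) (2^(p+1)) with hC | hD
        · rw [val_B hp (by omega) (by omega), val_B hp (by omega) (by omega)]
          push_cast
          linarith
        · rcases Nat.lt_or_ge k (2^(p+1)) with hC2 | hD2
          · -- k = 2^(p+1) - 1
            rw [val_B hp (by omega) (by omega), val_C (k := k+1) hp (by omega) (by omega)]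
            have hkc : ((k:ℕ):ℝ) = 2^(p+1) - 1 := by
              have hke : k = 2^(p+1) - 1 := by omega
              rw [hke]
              push_cast [Nat.cast_sub (by omega : 1 ≤ 2^(p+1))]
              ring
            push_cast
            rw [hkc]
            linarith
          · rw [val_C hp (by omega) (by omega), val_C (k := k+1) hp (by omega) (by omega)]
            push_cast
            linarith

lemma val_strict (hp : 2 ≤ p) : ∀ k l : ℕ, k < l → l ≤ 3*2^p - 1 → val p k < val p l := by
  intro k l
  induction l with
  | zero => omega
  | succ l ih =>
    intro hkl hl
    rcases Nat.lt_or_ge k l with h | h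
    · exact lt_trans (ih h (by omega)) (val_lt_succ hp hl)
    · have : k = l := by omega
      subst this
      exact val_lt_succ hp hl

lemma succF_int (hp : 2 ≤ p) (hpq : (p : ℤ) ≤ 2 ^ (q - 1) - 3) {k L : ℕ}
    (hL : 2 ≤ L) (hLp : L ≤ p) (h1 : 2^L ≤ k) (h2 : k < 2^(L+1)) (h3 : k ≤ 2^p) :
    succF p q (k:ℝ) = (k:ℝ) + 2^((L:ℤ)-(p:ℤ)) := by
  have hK := hKZ hp
  set A : ℤ := 2^(p-L) with hA
  have hA1 : (1:ℤ) ≤ A := one_le_pow₀ (by norm_num)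
  have hpA : (2:ℤ)^p = 2^L * A := by rw [hA, ← pow_add]; congr 1; omega
  have hp1A : (2:ℤ)^(p+1) = 2^(L+1) * A := by rw [hA, ← pow_add]; congr 1; omega
  have hk1Z : (2:ℤ)^L ≤ (k:ℤ) := by exact_mod_cast h1
  have hk2Z : (k:ℤ) ≤ 2^(L+1) - 1 := by
    have h : (k:ℤ) < 2^(L+1) := by exact_mod_cast h2
    omega
  have hk3Z : (k:ℤ) ≤ 2^p := by exact_mod_cast h3
  have hone : ((A:ℤ):ℝ) * 2^((L:ℤ)-(p:ℤ)) = 1 := by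
    rw [hA, cast_pow, ← zp]
    rw [show (((p-L:ℕ)):ℤ) + ((L:ℤ)-(p:ℤ)) = 0 from by omega]
    norm_num
  set n : ℤ := (k:ℤ) * A + 1 with hn
  have hkgrid : (k:ℝ) = ((k:ℤ) * A : ℤ) * 2^((L:ℤ)-(p:ℤ)) := by
    push_cast
    rw [mul_assoc]
    rw [show ((A:ℤ):ℝ) * 2^((L:ℤ)-(p:ℤ)) = 1 from hone]
    ring
  have hy : (k:ℝ) + 2^((L:ℤ)-(p:ℤ)) = ((n:ℤ):ℝ) * 2^((L:ℤ)-(p:ℤ)) := by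
    rw [hn]
    push_cast
    linear_combination (-(k:ℝ)) * hone
  have hgpos := zpos ((L:ℤ)-(p:ℤ))
  apply IsLeast.csInf_eq
  constructor
  · refine ⟨?_, by linarith⟩
    rw [hy]
    refine mem_Fset_norm hpq ?_ ?_ (by omega) (by omega)
    · have h2' : ((2:ℤ)^L) * A ≤ (k:ℤ) * A := mul_le_mul_of_nonneg_right (by omega) (by omega)
      rw [hn]
      nlinarith
    · rcases eq_or_lt_of_le hLp with he | hlt
      · have hAe : A = 1 := by rw [hA]; subst he; simp
        rw [hn, hAe, pow_succ]
        omega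
      · have hA2 : (2:ℤ) ≤ A := by
          rw [hA]
          calc (2:ℤ) = 2^1 := by norm_num
          _ ≤ 2^(p-L) := pow_le_pow_right₀ (by norm_num) (by omega)
        have h1' : (k:ℤ) * A ≤ ((2:ℤ)^(L+1) - 1) * A := mul_le_mul_of_nonneg_right (by omega) (by omega)
        rw [hn, pow_succ]
        rw [pow_succ] at hp1A
        nlinarith
  · rintro z ⟨hzF, hzk⟩
    rcases float_grid_or_small (E := (L:ℤ)) hzF with ⟨j, rfl⟩ | hsmall
    · have hjgt : ((k:ℤ) * A : ℝ) < (j:ℝ) := by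
        rw [hkgrid] at hzk
        have := (mul_lt_mul_iff_of_pos_right hgpos).1 hzk
        exact_mod_cast this
      have hjZ : (k:ℤ) * A + 1 ≤ j := by exact_mod_cast hjgt
      have : ((n:ℤ):ℝ) * 2^((L:ℤ)-(p:ℤ)) ≤ (j:ℝ) * 2^((L:ℤ)-(p:ℤ)) := by
        apply mul_le_mul_of_nonneg_right _ (le_of_lt hgpos)
        exact_mod_cast hjZ
      rw [hy]
      exact this
    · exfalso
      have hkR : (2:ℝ)^((L:ℤ)) ≤ (k:ℝ) := by
        have h : ((2^L:ℕ):ℝ) ≤ (k:ℝ) := by exact_mod_cast h1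
        rwa [cast_npow] at h
      have h1' : z ≤ |z| := le_abs_self z
      have h2' := zpos ((L:ℤ)-(p:ℤ)-1)
      linarith

end FPTAux

namespace FPTAux
open FPT

variable {p q : ℕ}

lemma s_val (hp : 2 ≤ p) (hpq : (p : ℤ) ≤ 2 ^ (q - 1) - 3) :
    ∀ k, fsuml p q (List.replicate k (EF.fin (1 + 2^(-(p:ℤ))))) = .fin (val p k) := by
  intro k
  induction k with
  | zero => rw [val_0]; rfl
  | succ k ih =>
    rcases Nat.eq_zero_or_pos k with rfl | hk1
    · rw [val_1]; rfl
    · obtain ⟨j, rfl⟩ : ∃ j, k = j + 1 := ⟨k-1, by omega⟩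
      rw [fsuml_succ, ih]
      show rnd p q (val p (j+1) + (1 + 2^(-(p:ℤ)))) = .fin (val p (j+2))
      have hK := hKN hp
      have hpow := hpowN (p := p)
      have hpowZ : (2:ℤ)^(p+1) = 2*2^p := by ring
      have hKZ2 : (4:ℤ) ≤ 2^p := hKZ hp
      have hcastZ : ((2^p:ℕ):ℤ) = (2:ℤ)^p := by push_cast; ring
      have hcastZ1 : ((2^(p+1):ℕ):ℤ) = (2:ℤ)^(p+1) := by push_cast; ring
      have ht0 : (0:ℝ) < 2^(-(p:ℤ)) := tpos
      rcases Nat.lt_or_ge (j+1) 4 with h4 | h4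
      · have hj3 : j ≤ 2 := by omega
        interval_cases j
        · rw [val_1, val_2]
          exact step1 hp hpq
        · rw [val_2, val_3,
            show (2:ℝ) + (2:ℝ)^((1:ℤ)-(p:ℤ)) + (1 + 2^(-(p:ℤ))) = 3 + 3 * 2^(-(p:ℤ)) from by
              rw [hg1]; ring]
          exact rnd_tie3 hp hpq
        · rw [val_3, val_A (k := 4) (by norm_num) (by omega),
            show Nat.log 2 4 = 2 from Nat.log_eq_of_pow_le_of_lt_pow (by norm_num) (by norm_num)]
          push_cast
          exact step3 hp hpq
      · rcases Nat.lt_or_ge (j+2) (2^p + 1) with hA | hnA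
        · -- regime A : j+2 ≤ 2^p
          obtain ⟨L, hLdef⟩ : ∃ L, Nat.log 2 (j+1) = L := ⟨_, rfl⟩
          have hL1 : 2^L ≤ j+1 := hLdef ▸ Nat.pow_log_le_self 2 (by omega)
          have hL2 : j+1 < 2^(L+1) := hLdef ▸ Nat.lt_pow_succ_log_self (by norm_num) _
          have hLge : 2 ≤ L := by
            have h := Nat.log_mono_right (b := 2) (show 4 ≤ j+1 by omega)
            rw [hLdef, show Nat.log 2 4 = 2 from
              Nat.log_eq_of_pow_le_of_lt_pow (by norm_num) (by norm_num)] at h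
            exact h
          have hLp' : L + 1 ≤ p := by
            have h2L : 2^L < 2^p := by omega
            have := (Nat.pow_lt_pow_iff_right (by norm_num : 1 < 2)).1 h2L
            omega
          rw [val_A (by omega) (by omega), hLdef]
          rcases Nat.lt_or_ge (j+2) (2^(L+1)) with hlt | hge
          · rw [val_A (k := j+2) (by omega) (by omega),
              show Nat.log 2 (j+2) = L from Nat.log_eq_of_pow_le_of_lt_pow (by omega) hlt,
              show ((j+2:ℕ):ℝ) = ((j+1:ℕ):ℝ) + 1 from by norm_cast]
            exact step_A hp hpq hLge hLp' hL1 (by omega)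
          · have hj2 : j+2 = 2^(L+1) := by omega
            rw [val_A (k := j+2) (by omega) (by omega),
              show Nat.log 2 (j+2) = L+1 from by
                rw [hj2]; exact Nat.log_pow (by norm_num) (L+1),
              show ((j+2:ℕ):ℝ) = (2:ℝ)^((L:ℤ)) * 2 from by
                rw [hj2]; rw [cast_npow (L+1), show ((L+1:ℕ):ℤ) = (L:ℤ)+1 from by push_cast; ring,
                  zp, show (2:ℝ)^(1:ℤ) = 2 from by norm_num],
              show (((L+1:ℕ)):ℤ) = (L:ℤ)+1 from by push_cast; ring]
            refine step_Bdry hp hpq hLge hLp' ?_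
            have hc2 : ((j+1:ℕ):ℝ) = (2:ℝ)^((L:ℤ)) * 2 - 1 := by
              have hje : j+1 = 2^(L+1) - 1 := by omega
              rw [hje]
              push_cast [Nat.cast_sub (show 1 ≤ 2^(L+1) from one_le_pow₀ (by norm_num))]
              rw [pow_succ, ← zpn L]
            rw [hc2]
        · rcases Nat.lt_or_ge (j+1) (2^p + 1) with hA2 | hB2
          · -- j+1 = 2^p
            have hm : j+1 = 2^p := by omega
            rw [val_A (by omega) (by omega), val_B (k := j+2) hp (by omega) (by omega),
              show Nat.log 2 (j+1) = p from by rw [hm]; exact Nat.log_pow (by norm_num) p,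
              show ((j+2:ℕ):ℝ) + 1 = (((2^p+2:ℤ)):ℝ) from by
                rw [show j+2 = 2^p + 1 from by omega]; push_cast; ring]
            refine step_int hp hpq (N := (2:ℤ)^p + 2) (by omega) (by omega) ?_
            rw [show ((p:ℤ)) - (p:ℤ) = 0 from by ring,
              show (2:ℝ)^(0:ℤ) = 1 from by norm_num,
              show j+1 = 2^p from hm]
            push_cast
            ring
          · rcases Nat.lt_or_ge (j+2) (2^(p+1)) with hC | hD
            · -- regime B generic
              have hB2Z : (2^p:ℤ) + 1 ≤ (j:ℤ)+1 := by exact_mod_cast hB2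
              have hCZ : (j:ℤ)+2 < 2^(p+1) := by exact_mod_cast hC
              rw [val_B hp (by omega) (by omega), val_B (k := j+2) hp (by omega) (by omega),
                show ((j+2:ℕ):ℝ) + 1 = ((((j:ℤ)+3:ℤ)):ℝ) from by push_cast; ring]
              refine step_int hp hpq (N := (j:ℤ)+3) (by omega) (by omega) ?_
              push_cast
              ring
            · rcases Nat.lt_or_ge (j+1) (2^(p+1)) with hC2 | hD2
              · -- j+2 = 2^(p+1)
                have hm : j+2 = 2^(p+1) := by omega
                rw [val_B hp (by omega) (by omega), val_C (k := j+2) hp (by omega) (by omega)]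
                refine step_even hp hpq (N := 2^p) (by omega) (by omega) ?_ ?_
                · rw [show j+1 = 2^(p+1) - 1 from by omega]
                  push_cast [Nat.cast_sub (show 1 ≤ 2^(p+1) from one_le_pow₀ (by norm_num))]
                  rw [pow_succ]
                  ring
                · rw [show j+2 = 2^(p+1) from hm]
                  push_cast
                  rw [pow_succ]
                  ring
              · rcases Nat.lt_or_ge (j+2) (3*2^p) with hE' | hF'
                · -- regime C generic
                  have hD2Z : (2:ℤ)^(p+1) ≤ (j:ℤ)+1 := by exact_mod_cast hD2
                  have hE'Z : (j:ℤ)+2 < 3*2^p := by exact_mod_cast hE'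
                  rw [val_C hp (by omega) (by omega), val_C (k := j+2) hp (by omega) (by omega)]
                  refine step_even hp hpq (N := (j:ℤ) - 2^p + 2) (by omega) (by omega) ?_ ?_
                  · push_cast
                    rw [pow_succ]
                    ring
                  · push_cast
                    rw [pow_succ]
                    ring
                · rw [val_ge_sat hp (by omega), val_ge_sat (k := j+2) hp (by omega), npow_p2]
                  refine step_sat hp hpq ?_
                  ring

end FPTAux

/-- Lemma `max-distinguish`. The left-associative partial sums
`s_k = ⊕_{i=1}^k 1⁺` are pairwise distinct for `k ≤ 3·2^p − 1`, saturate at `2^(p+2)`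
afterwards, and have the given explicit values. -/
theorem stmt9 (p q : ℕ) (hp : 2 ≤ p) (hpq : (p : ℤ) ≤ 2 ^ (q - 1) - 3) :
    let op : ℝ := 1 + 2 ^ (-(p : ℤ))
    let s : ℕ → FPT.EF := fun k => FPT.fsuml p q (List.replicate k (.fin op))
    (∀ k l : ℕ, k ≤ 3 * 2 ^ p - 1 → l ≤ 3 * 2 ^ p - 1 → k ≠ l → s k ≠ s l) ∧
    (∀ n : ℕ, s (3 * 2 ^ p - 1 + n) = .fin ((2 : ℝ) ^ (p + 2))) ∧
    s 0 = .fin 0 ∧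
    s 1 = .fin op ∧
    s 2 = .fin (2 + 2 ^ ((1 : ℤ) - p)) ∧
    s 3 = .fin (3 + 2 ^ ((2 : ℤ) - p)) ∧
    (∀ k : ℕ, 4 ≤ k → k ≤ 2 ^ p → s k = .fin (FPT.succF p q (k : ℝ))) ∧
    (∀ k : ℕ, 2 ^ p + 1 ≤ k → k ≤ 2 ^ (p + 1) - 1 → s k = .fin ((k : ℝ) + 1)) ∧
    (∀ k : ℕ, 2 ^ (p + 1) ≤ k → k ≤ 3 * 2 ^ p - 1 →
      s k = .fin ((2 : ℝ) ^ (p + 1) + 2 * ((k : ℝ) - 2 ^ (p + 1) + 1))) := by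
  intro op s
  have hsv : ∀ k, s k = FPT.EF.fin (FPTAux.val p k) := FPTAux.s_val hp hpq
  refine ⟨?_, ?_, ?_, ?_, ?_, ?_, ?_, ?_, ?_⟩
  · -- distinctness
    intro k l hk hl hne
    rw [hsv k, hsv l]
    intro hcon
    rw [FPT.EF.fin.injEq] at hcon
    rcases Nat.lt_or_ge k l with h | h
    · exact absurd hcon (ne_of_lt (FPTAux.val_strict hp k l h hl))
    · exact absurd hcon.symm (ne_of_lt (FPTAux.val_strict hp l k (by omega) hk))
  · -- saturation
    intro n
    rw [hsv, FPTAux.val_ge_sat hp (by omega)]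
  · rw [hsv, FPTAux.val_0]
  · rw [hsv, FPTAux.val_1]
  · rw [hsv, FPTAux.val_2]
  · rw [hsv, FPTAux.val_3]
  · -- succF clause
    intro k h4 h2p
    obtain ⟨L, hLdef⟩ : ∃ L, Nat.log 2 k = L := ⟨_, rfl⟩
    have hL1 : 2^L ≤ k := hLdef ▸ Nat.pow_log_le_self 2 (by omega)
    have hL2 : k < 2^(L+1) := hLdef ▸ Nat.lt_pow_succ_log_self (by norm_num) _
    have hLge : 2 ≤ L := by
      have h := Nat.log_mono_right (b := 2) h4
      rw [hLdef, show Nat.log 2 4 = 2 from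
        Nat.log_eq_of_pow_le_of_lt_pow (by norm_num) (by norm_num)] at h
      exact h
    have hLp' : L ≤ p := by
      have h := Nat.log_mono_right (b := 2) h2p
      rwa [hLdef, Nat.log_pow (by norm_num) p] at h
    rw [hsv k, FPTAux.val_A h4 h2p, hLdef,
      FPTAux.succF_int hp hpq hLge hLp' hL1 hL2 h2p]
  · intro k h1 h2
    rw [hsv k, FPTAux.val_B hp h1 h2]
  · intro k h1 h2
    rw [hsv k, FPTAux.val_C hp h1 h2]
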